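/- For any real q > 1 and λ ∈ (0,1), define δ = (λ^{-q/(q-1)} - 1)^{(q-1)/q} and h(x) = λ(δ(1-x)^{1/q} - x^{1/q}) for x ∈ (0,1). Then h is convex on (0, z] and concave on [z, 1), where z = δ^{-q/(2q-1)}/(δ^{-q/(2q-1)} + 1). -/

import Mathlib

/-- h(x) = λ(δ(1-x)^{1/q} - x^{1/q}) is convex on (0, z] and concave on [z, 1),
where z = δ^{-q/(2q-1)}/(δ^{-q/(2q-1)} + 1). -/
theorem stmt2 (q lam : ℝ) (hq : 1 < q) (hlam : lam ∈ Set.Ioo (0:ℝ) 1) :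
    let δ : ℝ := (lam ^ (-q/(q-1)) - 1) ^ ((q-1)/q)
    let z : ℝ := δ ^ (-q/(2*q-1)) / (δ ^ (-q/(2*q-1)) + 1)
    let h : ℝ → ℝ := fun x => lam * (δ * (1-x) ^ (1/q) - x ^ (1/q))
    ConvexOn ℝ (Set.Ioc 0 z) h ∧ ConcaveOn ℝ (Set.Ico z 1) h := by
  intro δ z h
  obtain ⟨hl0, hl1⟩ := hlam
  have hq0 : (0:ℝ) < q := lt_trans one_pos hq
  have hq1 : (0:ℝ) < q - 1 := by linarith
  have hp0 : (0:ℝ) < 1/q := by positivity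
  have hp1 : (1:ℝ)/q < 1 := by rw [div_lt_one hq0]; exact hq
  -- δ > 0
  have hbase : 1 < lam ^ (-q/(q-1)) := by
    rw [Real.one_lt_rpow_iff_of_pos hl0]
    right
    exact ⟨hl1, div_neg_of_neg_of_pos (by linarith) hq1⟩
  have hδ : 0 < δ := Real.rpow_pos_of_pos (by linarith) _
  have hA : 0 < δ ^ (-q/(2*q-1)) := Real.rpow_pos_of_pos hδ _
  have hz0 : 0 < z := div_pos hA (by linarith)
  have hz1 : z < 1 := by
    show δ ^ (-q/(2*q-1)) / (δ ^ (-q/(2*q-1)) + 1) < 1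
    rw [div_lt_one (by linarith)]; linarith
  -- z/(1-z) = δ^(-q/(2q-1))
  have hzr : z / (1 - z) = δ ^ (-q/(2*q-1)) := by
    show δ ^ (-q/(2*q-1)) / (δ ^ (-q/(2*q-1)) + 1) / (1 - δ ^ (-q/(2*q-1)) / (δ ^ (-q/(2*q-1)) + 1)) = _
    have h1 : δ ^ (-q/(2*q-1)) + 1 ≠ 0 := by positivity
    field_simp
    ring
  have hδz : (z / (1 - z)) ^ ((1:ℝ)/q - 2) = δ := by
    rw [hzr, ← Real.rpow_mul hδ.le]
    have : (-q/(2*q-1)) * ((1:ℝ)/q - 2) = 1 := by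
      have h1 : (2*q-1) ≠ 0 := by intro h'; nlinarith
      rw [div_mul_eq_mul_div, div_eq_one_iff_eq h1, mul_sub, mul_one_div, neg_div, div_self hq0.ne']
      ring
    rw [this, Real.rpow_one]
  -- continuity of h
  have c1 : Continuous fun x : ℝ => x ^ ((1:ℝ)/q) := Real.continuous_rpow_const hp0.le
  have hcont : Continuous h := by
    show Continuous fun x : ℝ => lam * (δ * (1-x) ^ ((1:ℝ)/q) - x ^ ((1:ℝ)/q))
    exact continuous_const.mul ((continuous_const.mul (c1.comp (continuous_const.sub continuous_id))).sub c1)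
  -- first and second derivatives
  set f1 : ℝ → ℝ := fun x => lam * (δ * ((1/q) * (1-x) ^ ((1:ℝ)/q-1) * (-1)) - (1/q) * x ^ ((1:ℝ)/q-1)) with hf1
  set f2 : ℝ → ℝ := fun x => lam * (1/q) * (1/q - 1) * (δ * (1-x) ^ ((1:ℝ)/q-2) - x ^ ((1:ℝ)/q-2)) with hf2
  have key1 : ∀ x ∈ Set.Ioo (0:ℝ) 1, HasDerivAt h (f1 x) x := by
    intro x hx
    have hx0 := hx.1
    have hx1 := hx.2
    have hneg : HasDerivAt (fun x : ℝ => 1 - x) (-1) x := by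
      simpa using (hasDerivAt_id x).const_sub 1
    have h1 : HasDerivAt (fun y : ℝ => y ^ ((1:ℝ)/q)) ((1/q) * x ^ ((1:ℝ)/q-1)) x :=
      Real.hasDerivAt_rpow_const (Or.inl hx0.ne')
    have h2 : HasDerivAt (fun x : ℝ => (1-x) ^ ((1:ℝ)/q)) ((1/q) * (1-x) ^ ((1:ℝ)/q-1) * (-1)) x := by
      have := (Real.hasDerivAt_rpow_const (p := (1:ℝ)/q)
        (Or.inl (by linarith : (1:ℝ) - x ≠ 0))).comp x hneg
      simpa [Function.comp_def] using this
    have : HasDerivAt (fun x : ℝ => lam * (δ * (1-x) ^ ((1:ℝ)/q) - x ^ ((1:ℝ)/q))) (f1 x) x :=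
      ((h2.const_mul δ).sub h1).const_mul lam
    exact this
  have key2 : ∀ x ∈ Set.Ioo (0:ℝ) 1, HasDerivAt f1 (f2 x) x := by
    intro x hx
    have hx0 := hx.1
    have hx1 := hx.2
    have hneg : HasDerivAt (fun x : ℝ => 1 - x) (-1) x := by
      simpa using (hasDerivAt_id x).const_sub 1
    have h1 : HasDerivAt (fun y : ℝ => y ^ ((1:ℝ)/q-1)) (((1:ℝ)/q-1) * x ^ ((1:ℝ)/q-2)) x := by
      have h' := Real.hasDerivAt_rpow_const (p := (1:ℝ)/q-1) (Or.inl hx0.ne')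
      rw [show (1:ℝ)/q-1-1 = 1/q-2 by ring] at h'
      exact h'
    have h2 : HasDerivAt (fun x : ℝ => (1-x) ^ ((1:ℝ)/q-1))
        ((((1:ℝ)/q-1) * (1-x) ^ ((1:ℝ)/q-2)) * (-1)) x := by
      have h1' : HasDerivAt (fun y : ℝ => y ^ ((1:ℝ)/q-1)) (((1:ℝ)/q-1) * ((1-x)) ^ ((1:ℝ)/q-2)) (1-x) := by
        have h' := Real.hasDerivAt_rpow_const (p := (1:ℝ)/q-1)
          (Or.inl (by linarith : (1:ℝ) - x ≠ 0))
        rw [show (1:ℝ)/q-1-1 = 1/q-2 by ring] at h'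
        exact h'
      simpa [Function.comp_def] using h1'.comp x hneg
    have H : HasDerivAt f1
        (lam * (δ * ((1/q) * ((((1:ℝ)/q-1) * (1-x) ^ ((1:ℝ)/q-2)) * (-1)) * (-1))
          - (1/q) * (((1:ℝ)/q-1) * x ^ ((1:ℝ)/q-2)))) x :=
      ((((h2.const_mul (1/q)).mul_const (-1)).const_mul δ).sub (h1.const_mul (1/q))).const_mul lam
    convert H using 1
    rw [hf2]; ring
  -- the key sign inequalities
  have signconv : ∀ x ∈ Set.Ioo (0:ℝ) z, δ * (1-x) ^ ((1:ℝ)/q-2) ≤ x ^ ((1:ℝ)/q-2) := by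
    intro x hx
    have hx0 := hx.1
    have hx1 : x < 1 := lt_trans hx.2 hz1
    have hfrac : x / (1-x) ≤ z / (1-z) := by
      rw [div_le_div_iff₀ (by linarith) (by linarith)]
      nlinarith [hx.2]
    have hmono : (z/(1-z)) ^ ((1:ℝ)/q-2) ≤ (x/(1-x)) ^ ((1:ℝ)/q-2) :=
      Real.rpow_le_rpow_of_nonpos (div_pos hx0 (by linarith)) hfrac (by linarith)
    rw [hδz] at hmono
    rw [Real.div_rpow hx0.le (by linarith : (0:ℝ) ≤ 1-x)] at hmono
    exact (le_div_iff₀ (Real.rpow_pos_of_pos (by linarith) _)).mp hmono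
  have signconc : ∀ x ∈ Set.Ioo z (1:ℝ), x ^ ((1:ℝ)/q-2) ≤ δ * (1-x) ^ ((1:ℝ)/q-2) := by
    intro x hx
    have hx0 : 0 < x := lt_trans hz0 hx.1
    have hx1 := hx.2
    have hfrac : z / (1-z) ≤ x / (1-x) := by
      rw [div_le_div_iff₀ (by linarith) (by linarith)]
      nlinarith [hx.1]
    have hmono : (x/(1-x)) ^ ((1:ℝ)/q-2) ≤ (z/(1-z)) ^ ((1:ℝ)/q-2) :=
      Real.rpow_le_rpow_of_nonpos (div_pos hz0 (by linarith)) hfrac (by linarith)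
    rw [hδz] at hmono
    rw [Real.div_rpow hx0.le (by linarith : (0:ℝ) ≤ 1-x)] at hmono
    exact (div_le_iff₀ (Real.rpow_pos_of_pos (by linarith) _)).mp hmono
  constructor
  · apply convexOn_of_hasDerivWithinAt2_nonneg (f' := f1) (f'' := f2)
      (convex_Ioc 0 z) hcont.continuousOn
    · intro x hx
      rw [interior_Ioc] at hx
      exact (key1 x ⟨hx.1, lt_trans hx.2 hz1⟩).hasDerivWithinAt
    · intro x hx
      rw [interior_Ioc] at hx
      exact (key2 x ⟨hx.1, lt_trans hx.2 hz1⟩).hasDerivWithinAt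
    · intro x hx
      rw [interior_Ioc] at hx
      have := signconv x hx
      rw [hf2]
      have hc : lam * (1/q) * (1/q - 1) ≤ 0 :=
        mul_nonpos_of_nonneg_of_nonpos (by positivity) (by linarith)
      nlinarith [mul_nonneg (neg_nonneg.2 hc)
        (neg_nonneg.2 (by linarith : δ * (1-x) ^ ((1:ℝ)/q-2) - x ^ ((1:ℝ)/q-2) ≤ 0))]
  · apply concaveOn_of_hasDerivWithinAt2_nonpos (f' := f1) (f'' := f2)
      (convex_Ico z 1) hcont.continuousOn
    · intro x hx
      rw [interior_Ico] at hx
      exact (key1 x ⟨lt_trans hz0 hx.1, hx.2⟩).hasDerivWithinAt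
    · intro x hx
      rw [interior_Ico] at hx
      exact (key2 x ⟨lt_trans hz0 hx.1, hx.2⟩).hasDerivWithinAt
    · intro x hx
      rw [interior_Ico] at hx
      have := signconc x hx
      rw [hf2]
      have hc : lam * (1/q) * (1/q - 1) ≤ 0 :=
        mul_nonpos_of_nonneg_of_nonpos (by positivity) (by linarith)
      nlinarith [mul_nonneg (neg_nonneg.2 hc)
        ((by linarith : (0:ℝ) ≤ δ * (1-x) ^ ((1:ℝ)/q-2) - x ^ ((1:ℝ)/q-2)))]
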